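/- Let m ≥ 2, p ≥ 2m, and let Q₂(z₁,z₂) = z₁² - z₂² + c z₁z₂ for real c. Define Q_m : ℂ^m → ℂ by Q_m(z₁,…,z_m) = z₃⋯z_m·Q₂(z₁,z₂). Then the sup norm of Q_m over the unit ball of ℓ_p^m(ℂ) satisfies ‖Q_m‖ ≤ 2^(-(m-2)/p)·(4+c²)^(1/2) when m is even. -/

import Mathlib

lemma q2_bound (c : ℝ) (a b : ℂ) (ha : ‖a‖ ≤ 1) (hb : ‖b‖ ≤ 1) :
    ‖a ^ 2 - b ^ 2 + (c : ℂ) * a * b‖ ≤ Real.sqrt (4 + c ^ 2) := by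
  have h1 : a.re ^ 2 + a.im ^ 2 ≤ 1 := by
    have hs := Complex.sq_norm a
    have h2 : ‖a‖ ^ 2 ≤ 1 := by nlinarith [norm_nonneg a]
    rw [hs] at h2; simpa [Complex.normSq_apply, sq] using h2
  have h2 : b.re ^ 2 + b.im ^ 2 ≤ 1 := by
    have hs := Complex.sq_norm b
    have h2 : ‖b‖ ^ 2 ≤ 1 := by nlinarith [norm_nonneg b]
    rw [hs] at h2; simpa [Complex.normSq_apply, sq] using h2
  rw [Real.le_sqrt (norm_nonneg _) (by positivity)]
  have hs := Complex.sq_norm (a ^ 2 - b ^ 2 + (c : ℂ) * a * b)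
  rw [hs]
  simp only [Complex.normSq_apply, Complex.add_re, Complex.add_im, Complex.sub_re,
    Complex.sub_im, Complex.mul_re, Complex.mul_im, Complex.ofReal_re, Complex.ofReal_im,
    pow_two]
  ring_nf
  set x1 := a.re; set y1 := a.im; set x2 := b.re; set y2 := b.im
  have hA : (x1^2 + y1^2 + x2^2 + y2^2)^2 ≤ 4 := by nlinarith
  have hB : 0 ≤ c^2 * (4 - (x1^2 + y1^2 + x2^2 + y2^2)^2) :=
    mul_nonneg (sq_nonneg c) (by linarith)
  nlinarith [sq_nonneg (c * (x1^2 + y1^2 - x2^2 - y2^2) - 4 * (x1*x2 + y1*y2)), hA, hB]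

lemma prod_pairs_le {ι : Type*} [DecidableEq ι] :
    ∀ (k : ℕ) (s : Finset ι) (a : ι → ℝ), s.card = 2 * k →
    (∀ i ∈ s, 0 ≤ a i) → (∑ i ∈ s, a i) ≤ 1 →
    ∏ i ∈ s, a i ≤ (1 / 2 : ℝ) ^ s.card := by
  intro k
  induction k with
  | zero =>
    intro s a hcard _ _
    rw [Finset.card_eq_zero.mp hcard] at *
    simp
  | succ k ih =>
    intro s a hcard h0 hsum
    obtain ⟨i, hi⟩ := Finset.card_pos.mp (by omega : 0 < s.card)
    have hti : (s.erase i).card = 2 * k + 1 := by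
      rw [Finset.card_erase_of_mem hi]; omega
    obtain ⟨j, hj⟩ := Finset.card_pos.mp (by omega : 0 < (s.erase i).card)
    have hji : j ≠ i := Finset.ne_of_mem_erase hj
    have hjs : j ∈ s := Finset.mem_of_mem_erase hj
    have hu : ((s.erase i).erase j).card = 2 * k := by
      rw [Finset.card_erase_of_mem hj]; omega
    have hsub : (s.erase i).erase j ⊆ s :=
      (Finset.erase_subset _ _).trans (Finset.erase_subset _ _)
    have h0u : ∀ l ∈ (s.erase i).erase j, 0 ≤ a l := fun l hl => h0 l (hsub hl)
    have hsumu : ∑ l ∈ (s.erase i).erase j, a l ≤ 1 :=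
      le_trans (Finset.sum_le_sum_of_subset_of_nonneg hsub
        (fun l hl _ => h0 l hl)) hsum
    have hP := ih ((s.erase i).erase j) a hu h0u hsumu
    rw [hu] at hP
    have hPnn : 0 ≤ ∏ l ∈ (s.erase i).erase j, a l := Finset.prod_nonneg h0u
    have hpairsum : a i + a j ≤ 1 := by
      have hsub2 : ({i, j} : Finset ι) ⊆ s := by
        intro l hl; simp at hl; rcases hl with rfl | rfl <;> assumption
      have := Finset.sum_le_sum_of_subset_of_nonneg hsub2 (fun l hl _ => h0 l hl)
      rw [Finset.sum_pair (Ne.symm hji)] at this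
      linarith
    have hij : a i * a j ≤ 1 / 4 := by
      nlinarith [sq_nonneg (a i - a j),
        mul_nonneg (sub_nonneg.2 hpairsum) (add_nonneg (h0 i hi) (h0 j hjs))]
    calc ∏ l ∈ s, a l = a i * (a j * ∏ l ∈ (s.erase i).erase j, a l) := by
          rw [Finset.mul_prod_erase _ _ hj, Finset.mul_prod_erase _ _ hi]
      _ = (a i * a j) * ∏ l ∈ (s.erase i).erase j, a l := by ring
      _ ≤ (1 / 4) * (1 / 2 : ℝ) ^ (2 * k) :=
          mul_le_mul hij hP hPnn (by norm_num)
      _ = (1 / 2 : ℝ) ^ s.card := by rw [hcard]; ring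

theorem stmt_10 (m : ℕ) (hm : 2 ≤ m) (hme : Even m) (p : ℝ) (hp : 2 * (m : ℝ) ≤ p)
    (c : ℝ) :
    sSup {y : ℝ | ∃ z : Fin m → ℂ, (∑ i, ‖z i‖ ^ p) ≤ 1 ∧
        y = ‖(∏ i ∈ Finset.univ.filter (fun i : Fin m => 2 ≤ (i : ℕ)), z i) *
              ((z ⟨0, by omega⟩) ^ 2 - (z ⟨1, by omega⟩) ^ 2 +
                (c : ℂ) * z ⟨0, by omega⟩ * z ⟨1, by omega⟩)‖} ≤
      (2 : ℝ) ^ (-((m : ℝ) - 2) / p) * Real.sqrt (4 + c ^ 2) := by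
  have hp0 : 0 < p := by
    have : (2:ℝ) ≤ (m:ℝ) := by exact_mod_cast hm
    linarith
  apply Real.sSup_le _ (by positivity)
  rintro y ⟨z, hz, rfl⟩
  rw [norm_mul]
  -- each coordinate has norm at most 1
  have hle1 : ∀ i : Fin m, ‖z i‖ ≤ 1 := by
    intro i
    have hterm : ‖z i‖ ^ p ≤ 1 := by
      have := Finset.single_le_sum (f := fun i : Fin m => ‖z i‖ ^ p)
        (fun j _ => Real.rpow_nonneg (norm_nonneg _) p) (Finset.mem_univ i)
      linarith
    by_contra h
    push_neg at h
    have : 1 < ‖z i‖ ^ p :=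
      (Real.one_lt_rpow_iff_of_pos (by linarith)).mpr (Or.inl ⟨h, hp0⟩)
    linarith
  -- bound the Q₂ factor
  have hQ := q2_bound c (z ⟨0, by omega⟩) (z ⟨1, by omega⟩) (hle1 _) (hle1 _)
  -- bound the product factor
  have hProd : ‖∏ i ∈ Finset.univ.filter (fun i : Fin m => 2 ≤ (i : ℕ)), z i‖ ≤
      (2 : ℝ) ^ (-((m : ℝ) - 2) / p) := by
    rw [norm_prod]
    set S := Finset.univ.filter (fun i : Fin m => 2 ≤ (i : ℕ)) with hS
    have hScard : S.card = m - 2 := by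
      have h01 : (⟨0, by omega⟩ : Fin m) ≠ ⟨1, by omega⟩ := by simp [Fin.ext_iff]
      have hSeq : S = Finset.univ \ {(⟨0, by omega⟩ : Fin m), ⟨1, by omega⟩} := by
        ext i
        simp [hS, Fin.ext_iff]
        omega
      rw [hSeq, Finset.card_sdiff_of_subset (Finset.subset_univ _), Finset.card_pair h01]
      simp
    obtain ⟨r, hr⟩ := hme
    have hk : S.card = 2 * (r - 1) := by omega
    have h0 : ∀ i ∈ S, 0 ≤ ‖z i‖ ^ p := fun i _ => Real.rpow_nonneg (norm_nonneg _) p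
    have hsum : ∑ i ∈ S, ‖z i‖ ^ p ≤ 1 :=
      le_trans (Finset.sum_le_sum_of_subset_of_nonneg (Finset.subset_univ S)
        (fun i _ _ => Real.rpow_nonneg (norm_nonneg _) p)) hz
    have hprodp : ∏ i ∈ S, ‖z i‖ ^ p ≤ (1 / 2 : ℝ) ^ S.card :=
      prod_pairs_le (r - 1) S _ hk h0 hsum
    have hxnn : 0 ≤ ∏ i ∈ S, ‖z i‖ := Finset.prod_nonneg (fun i _ => norm_nonneg _)
    have hxp : (∏ i ∈ S, ‖z i‖) ^ p ≤ (1 / 2 : ℝ) ^ S.card := by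
      rw [Real.finset_prod_rpow S _ (fun i _ => norm_nonneg _) p] at hprodp
      exact hprodp
    have hB : ((1 / 2 : ℝ) ^ S.card : ℝ) = (2 : ℝ) ^ (-(S.card : ℝ)) := by
      rw [Real.rpow_neg (by norm_num : (0:ℝ) ≤ 2), Real.rpow_natCast, one_div, inv_pow]
    have key : ∏ i ∈ S, ‖z i‖ ≤ ((2 : ℝ) ^ (-(S.card : ℝ))) ^ (1 / p) := by
      have h1 : ∏ i ∈ S, ‖z i‖ = ((∏ i ∈ S, ‖z i‖) ^ p) ^ (1 / p) := by
        rw [← Real.rpow_mul hxnn, mul_one_div_cancel hp0.ne', Real.rpow_one]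
      rw [h1, ← hB]
      exact Real.rpow_le_rpow (Real.rpow_nonneg hxnn p) hxp (by positivity)
    calc ∏ i ∈ S, ‖z i‖ ≤ ((2 : ℝ) ^ (-(S.card : ℝ))) ^ (1 / p) := key
      _ = (2 : ℝ) ^ (-((m : ℝ) - 2) / p) := by
          rw [← Real.rpow_mul (by norm_num : (0:ℝ) ≤ 2)]
          congr 1
          rw [hScard]
          have hcast : ((m - 2 : ℕ) : ℝ) = (m : ℝ) - 2 := by
            push_cast [Nat.cast_sub hm]; ring
          rw [hcast]; ring
  exact mul_le_mul hProd hQ (norm_nonneg _) (by positivity)
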